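/- If T is a hypercyclic bounded linear operator on a complex Banach space X, then the spectrum of T intersects the unit circle, i.e. there exists z ∈ σ(T) with |z| = 1. -/

import Mathlib

open Filter Topology

/-- A continuous linear operator `T` is hypercyclic if some vector has dense orbit. -/
def Hypercyclic {𝕜 X : Type*} [Semiring 𝕜] [TopologicalSpace X] [AddCommMonoid X]
    [Module 𝕜 X] (T : X →L[𝕜] X) : Prop :=
  ∃ x : X, Dense (Set.range fun n : ℕ => (T ^ n) x)

open Metric Complex

set_option linter.unusedSectionVars false
namespace KitaiAux
variable {A : Type*} [NormedRing A] [NormedAlgebra ℂ A] [CompleteSpace A]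

lemma res_diffAt {a : A} {z : ℂ} (hz : z ∈ resolventSet ℂ a) :
    DifferentiableAt ℂ (resolvent a) z :=
  (spectrum.hasDerivAt_resolvent hz).differentiableAt

lemma intgd_diffAt {a : A} (n : ℤ) {z : ℂ} (hz : z ∈ resolventSet ℂ a) (hz0 : z ≠ 0) :
    DifferentiableAt ℂ (fun w : ℂ => w ^ n • resolvent a w) z :=
  ((differentiableAt_zpow.mpr (Or.inl hz0))).smul (res_diffAt hz)

lemma ne_zero_of_mem_sphere {ρ : ℝ} (hρ : 0 < ρ) {z : ℂ} (hz : z ∈ sphere (0:ℂ) ρ) :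
    z ≠ 0 := by
  rw [mem_sphere_zero_iff_norm] at hz
  intro h; rw [h] at hz; simp at hz; exact hρ.ne' hz.symm

lemma intgd_integrable {a : A} (n : ℤ) {ρ : ℝ} (hρ : 0 < ρ)
    (hs : sphere (0:ℂ) ρ ⊆ resolventSet ℂ a) :
    CircleIntegrable (fun w : ℂ => w ^ n • resolvent a w) 0 ρ := by
  refine ContinuousOn.circleIntegrable hρ.le fun z hz => ?_
  exact (intgd_diffAt n (hs hz) (ne_zero_of_mem_sphere hρ hz)).continuousAt.continuousWithinAt

lemma zpow_smul_const_integrable (b : A) (n : ℤ) {ρ : ℝ} (hρ : 0 < ρ) :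
    CircleIntegrable (fun w : ℂ => w ^ n • b) 0 ρ := by
  refine ContinuousOn.circleIntegrable hρ.le fun z hz => ?_
  have : DifferentiableAt ℂ (fun w : ℂ => w ^ n • b) z :=
    (differentiableAt_zpow.mpr (Or.inl (ne_zero_of_mem_sphere hρ hz))).smul_const b
  exact this.continuousAt.continuousWithinAt

lemma ann_eq (a : A) (n : ℤ) {r R : ℝ} (h0 : 0 < r) (hle : r ≤ R)
    (hsub : ∀ z : ℂ, r ≤ ‖z‖ → ‖z‖ ≤ R → z ∈ resolventSet ℂ a) :
    (∮ z in C(0, R), z ^ n • resolvent a z) = ∮ z in C(0, r), z ^ n • resolvent a z := by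
  have hdiff : ∀ z ∈ closedBall (0:ℂ) R \ ball 0 r,
      DifferentiableAt ℂ (fun w : ℂ => w ^ n • resolvent a w) z := by
    intro z hz
    obtain ⟨h1, h2⟩ := hz
    rw [mem_closedBall, dist_zero_right] at h1
    rw [mem_ball, dist_zero_right, not_lt] at h2
    have hz0 : z ≠ 0 := fun h => by simp [h] at h2; linarith
    exact intgd_diffAt n (hsub z h2 h1) hz0
  refine circleIntegral_eq_of_differentiable_on_annulus_off_countable h0 hle
    Set.countable_empty (fun z hz => (hdiff z hz).continuousAt.continuousWithinAt)
    (fun z hz => hdiff z ⟨ball_subset_closedBall hz.1.1, fun h => hz.1.2 (ball_subset_closedBall h)⟩)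

lemma mul_circleIntegral (b : A) {f : ℂ → A} {c : ℂ} {R : ℝ} (hf : CircleIntegrable f c R) :
    (∮ z in C(c, R), b * f z) = b * ∮ z in C(c, R), f z := by
  have h := (ContinuousLinearMap.mul ℂ A b).intervalIntegral_comp_comm hf.out
  simp only [ContinuousLinearMap.mul_apply', map_smul] at h
  simpa [circleIntegral] using h

lemma circleIntegral_mul (b : A) {f : ℂ → A} {c : ℂ} {R : ℝ} (hf : CircleIntegrable f c R) :
    (∮ z in C(c, R), f z * b) = (∮ z in C(c, R), f z) * b := by
  have h := ((ContinuousLinearMap.mul ℂ A).flip b).intervalIntegral_comp_comm hf.out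
  simp only [ContinuousLinearMap.flip_apply, ContinuousLinearMap.mul_apply', map_smul] at h
  simpa [circleIntegral] using h

lemma z_smul_res {a : A} {z : ℂ} (hz : z ∈ resolventSet ℂ a) :
    z • resolvent a z = a * resolvent a z + 1 := by
  have h1 : (algebraMap ℂ A z - a) * resolvent a z = 1 :=
    Ring.mul_inverse_cancel _ hz
  rw [Algebra.smul_def, ← sub_add_cancel (algebraMap ℂ A z) a, add_mul, h1, add_comm]

lemma res_comm {a : A} {z : ℂ} (hz : z ∈ resolventSet ℂ a) :
    a * resolvent a z = resolvent a z * a := by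
  have hc : Commute a ↑hz.unit := by
    show Commute a (algebraMap ℂ A z - a)
    exact Commute.sub_right (Algebra.commute_algebraMap_right z a) (Commute.refl a)
  have h2 := hc.units_inv_right
  have hres : resolvent a z = ↑hz.unit⁻¹ := by
    rw [resolvent]
    conv_lhs => rw [← hz.unit_spec]
    rw [Ring.inverse_unit]
  rw [hres]; exact h2

/-- scalar circle integral of z^n over circle of radius ρ centred at 0 -/
lemma circleIntegral_zpow {ρ : ℝ} (hρ : ρ ≠ 0) (n : ℤ) (hn : n ≠ -1) :
    (∮ z in C(0, ρ), z ^ n) = 0 := by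
  have := circleIntegral.integral_sub_zpow_of_ne hn 0 0 ρ
  simpa using this

lemma circleIntegral_zpow_neg_one {ρ : ℝ} (hρ : ρ ≠ 0) :
    (∮ z in C(0, ρ), z ^ (-1 : ℤ)) = 2 * Real.pi * I := by
  calc (∮ z in C(0, ρ), z ^ (-1:ℤ)) = ∮ z in C(0, ρ), (z - 0)⁻¹ := by
        simp only [zpow_neg_one, sub_zero]
  _ = 2 * Real.pi * I := circleIntegral.integral_sub_center_inv 0 hρ

/-- the key algebraic step -/
lemma step (a : A) {ρ : ℝ} (hρ : 0 < ρ) (hs : sphere (0:ℂ) ρ ⊆ resolventSet ℂ a) (n : ℤ) :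
    a * (∮ z in C(0, ρ), z ^ n • resolvent a z)
      = (∮ z in C(0, ρ), z ^ (n+1) • resolvent a z) - (∮ z in C(0, ρ), z ^ n) • (1:A) := by
  rw [← mul_circleIntegral a (intgd_integrable n hρ hs)]
  have hcongr : Set.EqOn (fun z : ℂ => a * (z ^ n • resolvent a z))
      (fun z : ℂ => z ^ (n+1) • resolvent a z - z ^ n • (1:A)) (sphere 0 ρ) := by
    intro z hz
    have hz0 := ne_zero_of_mem_sphere hρ hz
    have hres : a * resolvent a z = z • resolvent a z - 1 := by
      rw [z_smul_res (hs hz), add_sub_cancel_right]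
    simp only [mul_smul_comm, hres, smul_sub, smul_smul, ← zpow_add_one₀ hz0]
  rw [circleIntegral.integral_congr hρ.le hcongr,
    circleIntegral.integral_sub (intgd_integrable (n+1) hρ hs)
      (zpow_smul_const_integrable 1 n hρ),
    circleIntegral.integral_smul_const]

lemma J_zero (a : A) [NormOneClass A] {R : ℝ} (hR : ‖a‖ < R) :
    (∮ z in C(0, R), z ^ (-1 : ℤ) • resolvent a z) = 0 := by
  have hR0 : 0 < R := lt_of_le_of_lt (norm_nonneg a) hR
  set J := ∮ z in C(0, R), z ^ (-1 : ℤ) • resolvent a z with hJ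
  have hsub : ∀ ρ : ℝ, R ≤ ρ → ∀ z : ℂ, R ≤ ‖z‖ → ‖z‖ ≤ ρ → z ∈ resolventSet ℂ a :=
    fun ρ _ z h1 _ => spectrum.mem_resolventSet_of_norm_lt (lt_of_lt_of_le hR h1)
  have hconst : ∀ ρ : ℝ, R ≤ ρ → (∮ z in C(0, ρ), z ^ (-1:ℤ) • resolvent a z) = J :=
    fun ρ hρ => ann_eq a (-1) hR0 hρ (hsub ρ hρ)
  obtain ⟨C, hC⟩ := (spectrum.resolvent_isBigO_inv (𝕜 := ℂ) a).bound
  rw [Filter.hasBasis_cobounded_norm.eventually_iff] at hC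
  obtain ⟨M, -, hM⟩ := hC
  have hJle : ∀ ε > 0, ‖J‖ ≤ ε := by
    intro ε hε
    -- choose ρ large
    obtain ⟨ρ, hρR, hρM, hρε⟩ : ∃ ρ : ℝ, R ≤ ρ ∧ M ≤ ρ ∧ 2 * Real.pi * |C| / ρ ≤ ε := by
      refine ⟨max (max R M) (max 1 (2 * Real.pi * |C| / ε)), ?_, ?_, ?_⟩
      · exact le_max_of_le_left (le_max_left _ _)
      · exact le_max_of_le_left (le_max_right _ _)
      · rw [div_le_iff₀ (by positivity)]
        have h1 : 2 * Real.pi * |C| / ε ≤ max (max R M) (max 1 (2 * Real.pi * |C| / ε)) :=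
          le_max_of_le_right (le_max_right _ _)
        calc 2 * Real.pi * |C| = (2 * Real.pi * |C| / ε) * ε := by field_simp
        _ ≤ max (max R M) (max 1 (2 * Real.pi * |C| / ε)) * ε :=
            mul_le_mul_of_nonneg_right h1 hε.le
        _ = ε * max (max R M) (max 1 (2 * Real.pi * |C| / ε)) := mul_comm _ _
    have hρ0 : 0 < ρ := lt_of_lt_of_le hR0 hρR
    rw [← hconst ρ hρR]
    have hb : ∀ z ∈ sphere (0:ℂ) ρ, ‖z ^ (-1:ℤ) • resolvent a z‖ ≤ |C| / ρ ^ 2 := by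
      intro z hz
      rw [mem_sphere_zero_iff_norm] at hz
      have hz0 : z ≠ 0 := by intro h; rw [h] at hz; simp at hz; exact hρ0.ne' hz.symm
      have h1 : ‖resolvent a z‖ ≤ C * ‖z⁻¹‖ := hM (show M ≤ ‖z‖ by rw [hz]; exact hρM)
      rw [norm_smul, norm_zpow, hz]
      have : C * ‖z⁻¹‖ ≤ |C| / ρ := by
        rw [norm_inv, hz]
        calc C * ρ⁻¹ ≤ |C| * ρ⁻¹ := by
              exact mul_le_mul_of_nonneg_right (le_abs_self C) (by positivity)
        _ = |C| / ρ := by rw [div_eq_mul_inv]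
      calc ρ ^ (-1:ℤ) * ‖resolvent a z‖ ≤ ρ ^ (-1:ℤ) * (|C| / ρ) := by
            apply mul_le_mul_of_nonneg_left (h1.trans this) (by positivity)
      _ = |C| / ρ ^ 2 := by
            rw [zpow_neg_one, sq]; field_simp
    calc ‖∮ z in C(0, ρ), z ^ (-1:ℤ) • resolvent a z‖ ≤ 2 * Real.pi * ρ * (|C| / ρ ^ 2) :=
          circleIntegral.norm_integral_le_of_norm_le_const hρ0.le hb
    _ = 2 * Real.pi * |C| / ρ := by
          field_simp
    _ ≤ ε := hρε
  have h0 : ‖J‖ ≤ 0 := by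
    by_contra h
    push_neg at h
    have := hJle (‖J‖ / 2) (by linarith)
    linarith
  exact norm_le_zero_iff.mp h0


lemma integral_res (a : A) [NormOneClass A] {R : ℝ} (hR : ‖a‖ < R) :
    (∮ z in C(0, R), resolvent a z) = (2 * Real.pi * I) • (1 : A) := by
  have hR0 : 0 < R := lt_of_le_of_lt (norm_nonneg a) hR
  have hs : sphere (0:ℂ) R ⊆ resolventSet ℂ a := fun z hz => by
    rw [mem_sphere_zero_iff_norm] at hz
    exact spectrum.mem_resolventSet_of_norm_lt (hz ▸ hR)
  have h := step a hR0 hs (-1)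
  rw [J_zero a hR, mul_zero, circleIntegral_zpow_neg_one hR0.ne'] at h
  have h0 : (∮ z in C(0, R), z ^ (-1 + 1 : ℤ) • resolvent a z)
      = ∮ z in C(0, R), resolvent a z := by
    simp only [neg_add_cancel, zpow_zero, one_smul]
  rw [h0] at h
  have := sub_eq_zero.mp h.symm
  exact this


lemma sphere_subset_res (a : A) [NormOneClass A] {R : ℝ} (hR : ‖a‖ < R) :
    sphere (0:ℂ) R ⊆ resolventSet ℂ a := fun z hz => by
  rw [mem_sphere_zero_iff_norm] at hz
  exact spectrum.mem_resolventSet_of_norm_lt (hz ▸ hR)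

lemma integral_res_pow (a : A) [NormOneClass A] {R : ℝ} (hR : ‖a‖ < R) (n : ℕ) :
    (∮ z in C(0, R), z ^ (n : ℤ) • resolvent a z) = (2 * Real.pi * I) • a ^ n := by
  have hR0 : 0 < R := lt_of_le_of_lt (norm_nonneg a) hR
  induction n with
  | zero =>
    have h0 : (∮ z in C(0, R), z ^ ((0:ℕ) : ℤ) • resolvent a z)
        = ∮ z in C(0, R), resolvent a z := by
      simp only [Nat.cast_zero, zpow_zero, one_smul]
    rw [h0, integral_res a hR, pow_zero]
  | succ n ih =>
    have h := step a hR0 (sphere_subset_res a hR) n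
    rw [circleIntegral_zpow hR0.ne' n (by omega), zero_smul, sub_zero, ih] at h
    have hcast : ((n:ℤ) + 1) = ((n + 1 : ℕ) : ℤ) := by push_cast; ring
    rw [hcast] at h
    rw [← h, mul_smul_comm, ← pow_succ']


lemma comm_int (a : A) {ρ : ℝ} (hρ : 0 < ρ) (hs : sphere (0:ℂ) ρ ⊆ resolventSet ℂ a)
    (n : ℤ) : Commute a (∮ z in C(0, ρ), z ^ n • resolvent a z) := by
  show a * _ = _ * a
  rw [← mul_circleIntegral a (intgd_integrable n hρ hs),
    ← circleIntegral_mul a (intgd_integrable n hρ hs)]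
  refine circleIntegral.integral_congr hρ.le fun z hz => ?_
  show a * (z ^ n • resolvent a z) = (z ^ n • resolvent a z) * a
  rw [mul_smul_comm, res_comm (hs hz), smul_mul_assoc]

lemma norm_int_le (a : A) {ρ : ℝ} (hρ : 0 < ρ) {Cb : ℝ}
    (hCb : ∀ z ∈ sphere (0:ℂ) ρ, ‖resolvent a z‖ ≤ Cb) (n : ℤ) :
    ‖∮ z in C(0, ρ), z ^ n • resolvent a z‖ ≤ 2 * Real.pi * ρ * (ρ ^ n * Cb) := by
  have hb : ∀ z ∈ sphere (0:ℂ) ρ, ‖z ^ n • resolvent a z‖ ≤ ρ ^ n * Cb := by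
    intro z hz
    have hzn : ‖z‖ = ρ := mem_sphere_zero_iff_norm.mp hz
    rw [norm_smul, norm_zpow, hzn]
    exact mul_le_mul_of_nonneg_left (hCb z hz) (zpow_nonneg hρ.le n)
  exact circleIntegral.norm_integral_le_of_norm_le_const hρ.le hb

lemma exists_res_bound (a : A) {ρ : ℝ} (hρ : 0 < ρ)
    (hs : sphere (0:ℂ) ρ ⊆ resolventSet ℂ a) :
    ∃ Cb : ℝ, 0 ≤ Cb ∧ ∀ z ∈ sphere (0:ℂ) ρ, ‖resolvent a z‖ ≤ Cb := by
  obtain ⟨Cb, hCb⟩ := (isCompact_sphere (0:ℂ) ρ).exists_bound_of_continuousOn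
    (fun z hz => (res_diffAt (hs hz)).continuousAt.continuousWithinAt)
  exact ⟨max Cb 0, le_max_right _ _, fun z hz => (hCb z hz).trans (le_max_left _ _)⟩

end KitaiAux

set_option maxHeartbeats 1000000 in
/-- The spectrum of a hypercyclic bounded operator on a (nonzero) complex Banach space
meets the unit circle. -/
theorem spectrum_inter_unitCircle_of_hypercyclic {X : Type*}
    [NormedAddCommGroup X] [NormedSpace ℂ X] [CompleteSpace X] [Nontrivial X]
    (T : X →L[ℂ] X) (hT : Hypercyclic T) :
    ∃ z ∈ spectrum ℂ T, ‖z‖ = 1 := by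
  classical
  by_contra hcon
  push_neg at hcon
  have hcirc : sphere (0:ℂ) 1 ⊆ resolventSet ℂ T := by
    intro z hz
    rw [mem_sphere_zero_iff_norm] at hz
    by_contra hmem
    exact hcon z hmem hz
  obtain ⟨δ₀, hδ₀, hthick⟩ := (isCompact_sphere (0:ℂ) 1).exists_thickening_subset_open
    (spectrum.isOpen_resolventSet T) hcirc
  have hmin : 0 < min δ₀ 1 := lt_min hδ₀ one_pos
  set ε : ℝ := min δ₀ 1 / 2 with hεdef
  have hε0 : 0 < ε := by rw [hεdef]; linarith
  have hε1 : ε ≤ 1/2 := by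
    rw [hεdef]
    have : min δ₀ 1 ≤ 1 := min_le_right _ _
    linarith
  have hεδ : ε < δ₀ := by
    rw [hεdef]
    have : min δ₀ 1 ≤ δ₀ := min_le_left _ _
    linarith
  set r : ℝ := 1 - ε with hrdef
  set r' : ℝ := 1 + ε with hr'def
  have hr0 : 0 < r := by rw [hrdef]; linarith
  have hr1 : r ≤ 1 := by rw [hrdef]; linarith
  have hr'0 : 0 < r' := by rw [hr'def]; linarith
  have hr'1 : 1 ≤ r' := by rw [hr'def]; linarith
  have hrr' : r ≤ r' := by rw [hrdef, hr'def]; linarith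
  have hann : ∀ z : ℂ, r ≤ ‖z‖ → ‖z‖ ≤ r' → z ∈ resolventSet ℂ T := by
    intro z h1 h2
    have hnz : (0:ℝ) < ‖z‖ := lt_of_lt_of_le hr0 h1
    apply hthick
    rw [mem_thickening_iff]
    refine ⟨((‖z‖:ℂ))⁻¹ • z, ?_, ?_⟩
    · have hz0 : z ≠ 0 := by
        intro h; rw [h, norm_zero] at hnz; exact lt_irrefl _ hnz
      rw [mem_sphere_zero_iff_norm, norm_smul, norm_inv, Complex.norm_real,
        Real.norm_eq_abs, abs_of_pos hnz]
      exact inv_mul_cancel₀ hnz.ne'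
    · rw [dist_eq_norm]
      have he : z - ((‖z‖:ℂ))⁻¹ • z = ((1 - ‖z‖⁻¹ : ℝ) : ℂ) • z := by
        push_cast
        rw [sub_smul, one_smul]
      rw [he, norm_smul, Complex.norm_real, Real.norm_eq_abs]
      have hcalc : |1 - ‖z‖⁻¹| * ‖z‖ = |‖z‖ - 1| := by
        calc |1 - ‖z‖⁻¹| * ‖z‖ = |(1 - ‖z‖⁻¹) * ‖z‖| := by
              rw [abs_mul, abs_of_pos hnz]
        _ = |‖z‖ - 1| := by rw [sub_mul, one_mul, inv_mul_cancel₀ hnz.ne']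
      rw [hcalc]
      have h1' : 1 - ε ≤ ‖z‖ := by rw [← hrdef]; exact h1
      have h2' : ‖z‖ ≤ 1 + ε := by rw [← hr'def]; exact h2
      have : |‖z‖ - 1| ≤ ε := by
        rw [abs_le]
        constructor <;> linarith
      linarith
  set R₀ : ℝ := ‖T‖ + 2 with hR₀def
  have hTR₀ : ‖T‖ < R₀ := by rw [hR₀def]; linarith
  have hR₀0 : 0 < R₀ := lt_of_le_of_lt (norm_nonneg T) hTR₀
  have hR₀2 : 2 ≤ R₀ := by rw [hR₀def]; linarith [norm_nonneg T]
  have hr'R₀ : r' ≤ R₀ := by rw [hr'def]; linarith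
  have hs_r : sphere (0:ℂ) r ⊆ resolventSet ℂ T := fun z hz => by
    rw [mem_sphere_zero_iff_norm] at hz
    exact hann z (le_of_eq hz.symm) (by rw [hz]; exact hrr')
  have hs_r' : sphere (0:ℂ) r' ⊆ resolventSet ℂ T := fun z hz => by
    rw [mem_sphere_zero_iff_norm] at hz
    exact hann z (by rw [hz]; exact hrr') (le_of_eq hz)
  have hs_R₀ : sphere (0:ℂ) R₀ ⊆ resolventSet ℂ T := KitaiAux.sphere_subset_res T hTR₀
  obtain ⟨Cr, hCr0, hCr⟩ := KitaiAux.exists_res_bound T hr0 hs_r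
  obtain ⟨Cr', hCr'0, hCr'⟩ := KitaiAux.exists_res_bound T hr'0 hs_r'
  obtain ⟨C₀, hC₀0, hC₀⟩ := KitaiAux.exists_res_bound T hR₀0 hs_R₀
  set c : ℂ := 2 * Real.pi * I with hcdef
  have hc0 : ‖c‖ ≠ 0 := by
    simp [hcdef, Real.pi_ne_zero, I_ne_zero, Complex.ext_iff, Real.pi_pos.ne']
  have hcpos : 0 < ‖c‖ := lt_of_le_of_ne (norm_nonneg c) (Ne.symm hc0)
  set P : X →L[ℂ] X := ∮ z in C(0, r), resolvent T z with hPdef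
  set Pn : ℕ → (X →L[ℂ] X) := fun n => ∮ z in C(0, r), z ^ (n:ℤ) • resolvent T z
    with hPndef
  set Sn : ℕ → (X →L[ℂ] X) := fun n =>
    (∮ z in C(0, R₀), z ^ (-(n:ℤ)) • resolvent T z)
      - ∮ z in C(0, r'), z ^ (-(n:ℤ)) • resolvent T z with hSndef
  have hPn0 : Pn 0 = P := by
    rw [hPndef, hPdef]
    simp only [Nat.cast_zero, zpow_zero, one_smul]
  have hTP : ∀ n : ℕ, T * Pn n = Pn (n + 1) := by
    intro n
    have h := KitaiAux.step T hr0 hs_r (n : ℤ)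
    rw [KitaiAux.circleIntegral_zpow hr0.ne' (n:ℤ) (by omega), zero_smul, sub_zero] at h
    rw [hPndef]
    simp only
    rw [h]
    congr 1
  have hPn : ∀ n : ℕ, Pn n = T ^ n * P := by
    intro n
    induction n with
    | zero => rw [hPn0, pow_zero, one_mul]
    | succ n ih => rw [← hTP n, ih, ← mul_assoc, ← pow_succ']
  have hPn_norm : ∀ n : ℕ, ‖Pn n‖ ≤ 2 * Real.pi * Cr := by
    intro n
    have h := KitaiAux.norm_int_le T hr0 hCr (n : ℤ)
    have h1 : r ^ (n:ℤ) * Cr ≤ Cr := by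
      rw [zpow_natCast]
      nlinarith [pow_le_one₀ hr0.le hr1 (n := n), pow_nonneg hr0.le n]
    have t0 : 0 ≤ r ^ (n:ℤ) * Cr := mul_nonneg (zpow_nonneg hr0.le _) hCr0
    calc ‖Pn n‖ ≤ 2 * Real.pi * r * (r ^ (n:ℤ) * Cr) := h
    _ ≤ 2 * Real.pi * 1 * (r ^ (n:ℤ) * Cr) := by
        apply mul_le_mul_of_nonneg_right _ t0
        nlinarith [Real.pi_pos]
    _ = 2 * Real.pi * (r ^ (n:ℤ) * Cr) := by ring
    _ ≤ 2 * Real.pi * Cr := by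
        apply mul_le_mul_of_nonneg_left h1
        positivity
  -- the S side
  have hresR₀ : (∮ z in C(0, R₀), resolvent T z) = c • 1 := KitaiAux.integral_res T hTR₀
  have hresr' : (∮ z in C(0, r'), resolvent T z) = P := by
    rw [hPdef]
    have := KitaiAux.ann_eq T 0 hr0 hrr' hann
    simp only [zpow_zero, one_smul] at this
    exact this
  have hS1 : T * Sn 1 = c • 1 - P := by
    rw [hSndef]
    simp only
    rw [mul_sub]
    have h1 := KitaiAux.step T hR₀0 hs_R₀ (-((1:ℕ):ℤ))
    have h2 := KitaiAux.step T hr'0 hs_r' (-((1:ℕ):ℤ))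
    simp only [Nat.cast_one] at h1 h2 ⊢
    rw [KitaiAux.circleIntegral_zpow_neg_one hR₀0.ne'] at h1
    rw [KitaiAux.circleIntegral_zpow_neg_one hr'0.ne'] at h2
    have e0 : (-1 + 1 : ℤ) = 0 := by ring
    rw [e0] at h1 h2
    simp only [zpow_zero, one_smul] at h1 h2
    rw [h1, h2, hresR₀, hresr', hcdef]
    abel
  have hSsucc : ∀ n : ℕ, 1 ≤ n → T * Sn (n + 1) = Sn n := by
    intro n hn
    rw [hSndef]
    simp only
    rw [mul_sub]
    have h1 := KitaiAux.step T hR₀0 hs_R₀ (-((n+1:ℕ):ℤ))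
    have h2 := KitaiAux.step T hr'0 hs_r' (-((n+1:ℕ):ℤ))
    rw [KitaiAux.circleIntegral_zpow hR₀0.ne' _ (by omega), zero_smul, sub_zero] at h1
    rw [KitaiAux.circleIntegral_zpow hr'0.ne' _ (by omega), zero_smul, sub_zero] at h2
    have e0 : (-((n+1:ℕ):ℤ) + 1) = -(n:ℤ) := by push_cast; ring
    rw [e0] at h1 h2
    rw [h1, h2]
  have hSn : ∀ n : ℕ, 1 ≤ n → T ^ n * Sn n = c • 1 - P := by
    intro n hn
    induction n, hn using Nat.le_induction with
    | base => rw [pow_one]; exact hS1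
    | succ n hn ih => rw [pow_succ, mul_assoc, hSsucc n hn, ih]
  have hScomm : ∀ n : ℕ, Commute T (Sn n) := by
    intro n
    exact (KitaiAux.comm_int T hR₀0 hs_R₀ (-(n:ℤ))).sub_right
      (KitaiAux.comm_int T hr'0 hs_r' (-(n:ℤ)))
  have hSn_norm : ∀ n : ℕ,
      ‖Sn n‖ ≤ 2 * Real.pi * R₀ * C₀ * (R₀⁻¹) ^ n + 2 * Real.pi * r' * Cr' * (r'⁻¹) ^ n := by
    intro n
    have h1 := KitaiAux.norm_int_le T hR₀0 hC₀ (-(n:ℤ))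
    have h2 := KitaiAux.norm_int_le T hr'0 hCr' (-(n:ℤ))
    have e1 : ∀ ρ : ℝ, 0 < ρ → ρ ^ (-(n:ℤ)) = (ρ⁻¹) ^ n := by
      intro ρ hρ
      rw [zpow_neg, zpow_natCast, inv_pow]
    rw [e1 R₀ hR₀0] at h1
    rw [e1 r' hr'0] at h2
    calc ‖Sn n‖ ≤ ‖(∮ z in C(0, R₀), z ^ (-(n:ℤ)) • resolvent T z)‖
        + ‖(∮ z in C(0, r'), z ^ (-(n:ℤ)) • resolvent T z)‖ := norm_sub_le _ _
    _ ≤ 2 * Real.pi * R₀ * ((R₀⁻¹) ^ n * C₀) + 2 * Real.pi * r' * ((r'⁻¹) ^ n * Cr') := by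
        exact add_le_add h1 h2
    _ = _ := by ring
  have htend : Tendsto (fun n : ℕ =>
      2 * Real.pi * R₀ * C₀ * (R₀⁻¹) ^ n + 2 * Real.pi * r' * Cr' * (r'⁻¹) ^ n)
      atTop (nhds 0) := by
    have t1 : Tendsto (fun n : ℕ => (R₀⁻¹) ^ n) atTop (nhds 0) :=
      tendsto_pow_atTop_nhds_zero_of_lt_one (by positivity)
        (by rw [inv_lt_one_iff₀]; right; linarith)
    have t2 : Tendsto (fun n : ℕ => (r'⁻¹) ^ n) atTop (nhds 0) :=
      tendsto_pow_atTop_nhds_zero_of_lt_one (by positivity)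
        (by rw [inv_lt_one_iff₀]; right; linarith)
    have := (t1.const_mul (2 * Real.pi * R₀ * C₀)).add (t2.const_mul (2 * Real.pi * r' * Cr'))
    simpa using this
  -- dynamics
  obtain ⟨x, hx⟩ := hT
  set q : X := c • x - P x with hqdef
  by_cases hq0 : q = 0
  · -- orbit is bounded
    have hPx : P x = c • x := by
      have := sub_eq_zero.mp hq0
      exact this.symm
    set B : ℝ := 2 * Real.pi * Cr * ‖x‖ / ‖c‖ with hBdef
    have hB0 : 0 ≤ B := by
      rw [hBdef]
      positivity
    have horb : ∀ n : ℕ, ‖(T ^ n) x‖ ≤ B := by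
      intro n
      have h1 : (Pn n) x = c • (T ^ n) x := by
        rw [hPn n, ContinuousLinearMap.mul_apply, hPx, map_smul]
      have h2 : ‖c‖ * ‖(T ^ n) x‖ = ‖(Pn n) x‖ := by
        rw [h1, norm_smul]
      have h3 : ‖(Pn n) x‖ ≤ ‖Pn n‖ * ‖x‖ := ContinuousLinearMap.le_opNorm _ _
      have h4 : ‖Pn n‖ * ‖x‖ ≤ 2 * Real.pi * Cr * ‖x‖ :=
        mul_le_mul_of_nonneg_right (hPn_norm n) (norm_nonneg x)
      rw [hBdef, le_div_iff₀ hcpos]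
      calc ‖(T ^ n) x‖ * ‖c‖ = ‖c‖ * ‖(T ^ n) x‖ := mul_comm _ _
      _ = ‖(Pn n) x‖ := h2
      _ ≤ 2 * Real.pi * Cr * ‖x‖ := h3.trans h4
    obtain ⟨y0, hy0⟩ := exists_ne (0 : X)
    set y : X := ((B + 2) / ‖y0‖ : ℝ) • y0 with hydef
    have hy0' : ‖y0‖ ≠ 0 := norm_ne_zero_iff.mpr hy0
    have hy : ‖y‖ = B + 2 := by
      have ht : 0 ≤ (B + 2) / ‖y0‖ := by positivity
      rw [hydef, norm_smul, Real.norm_of_nonneg ht, div_mul_cancel₀ _ hy0']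
    obtain ⟨p, hpb, hpS⟩ := Metric.dense_iff.mp hx y 1 one_pos
    rw [mem_ball] at hpb
    obtain ⟨n, rfl⟩ := hpS
    have : ‖(T ^ n) x‖ ≥ B + 1 := by
      have h5 := norm_sub_norm_le y ((T ^ n) x)
      rw [← dist_eq_norm, dist_comm, hy] at h5
      linarith
    linarith [horb n]
  · -- orbit norms go to infinity
    have hq_pos : 0 < ‖q‖ := norm_pos_iff.mpr hq0
    have hqS : ∀ n : ℕ, 1 ≤ n → q = (Sn n) ((T ^ n) x) := by
      intro n hn
      have h1 : Sn n * T ^ n = c • 1 - P := by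
        rw [← ((hScomm n).pow_left n).eq, hSn n hn]
      have h2 : ((c • 1 - P) : X →L[ℂ] X) x = c • x - P x := by
        rw [ContinuousLinearMap.sub_apply, ContinuousLinearMap.smul_apply,
          ContinuousLinearMap.one_apply]
      rw [hqdef, ← h2, ← h1, ContinuousLinearMap.mul_apply]
    have hx0 : ∀ n : ℕ, (T ^ n) x ≠ 0 := by
      intro n h0
      have h1 := hqS (n + 1) (by omega)
      rw [pow_succ', ContinuousLinearMap.mul_apply, h0, map_zero, map_zero] at h1
      exact hq0 h1
    obtain ⟨N, hN⟩ := (eventually_atTop.mp (htend.eventually (gt_mem_nhds hq_pos)))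
    set N' : ℕ := max N 1 with hN'def
    have hN'1 : 1 ≤ N' := le_max_right _ _
    have hne : (Finset.range N').Nonempty := ⟨0, Finset.mem_range.mpr (by omega)⟩
    set δ₁ : ℝ := (Finset.range N').inf' hne fun k => ‖(T ^ k) x‖ with hδ₁def
    have hδ₁pos : 0 < δ₁ := by
      rw [hδ₁def, Finset.lt_inf'_iff]
      exact fun k _ => norm_pos_iff.mpr (hx0 k)
    set δ : ℝ := min δ₁ 1 with hδdef
    have hδpos : 0 < δ := lt_min hδ₁pos one_pos
    obtain ⟨p, hpb, hpS⟩ := Metric.dense_iff.mp hx 0 δ hδpos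
    rw [mem_ball, dist_zero_right] at hpb
    obtain ⟨n, rfl⟩ := hpS
    have hnN : N' ≤ n := by
      by_contra h
      push_neg at h
      have h1 : δ₁ ≤ ‖(T ^ n) x‖ :=
        Finset.inf'_le _ (Finset.mem_range.mpr h)
      have h2 : δ ≤ δ₁ := min_le_left _ _
      linarith [hpb]
    have hn1 : 1 ≤ n := le_trans hN'1 hnN
    have h1 : ‖q‖ ≤ ‖Sn n‖ * ‖(T ^ n) x‖ :=
      (hqS n hn1).symm ▸ ContinuousLinearMap.le_opNorm (Sn n) ((T ^ n) x)
    have h2 := hSn_norm n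
    have h3 := hN n (le_trans (le_max_left _ _) hnN)
    have h4 : ‖(T ^ n) x‖ < 1 := lt_of_lt_of_le hpb (min_le_right _ _)
    nlinarith [norm_nonneg (Sn n), norm_nonneg ((T ^ n) x)]
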